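/- The ideal generated by all $2\times 2$ minors of a generic $m \times n$ matrix of indeterminates over a field is a prime ideal of the polynomial ring in the $mn$ entries. -/

import Mathlib

/-- The ideal generated by all 2×2 minors of a matrix. -/
def minors2 {R : Type*} [CommRing R] {α β : Type*} (M : Matrix α β R) : Ideal R :=
  Ideal.span { p | ∃ i i' j j', p = M i j * M i' j' - M i j' * M i' j }

namespace Minors2Aux

open MvPolynomial Finsupp

variable (k : Type*) [Field k] (m n : ℕ)

/-- The monomial map `x_{ij} ↦ s_i t_j`. -/
noncomputable def phi : MvPolynomial (Fin m × Fin n) k →ₐ[k] MvPolynomial (Fin m ⊕ Fin n) k :=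
  MvPolynomial.aeval fun p => MvPolynomial.X (Sum.inl p.1) * MvPolynomial.X (Sum.inr p.2)

variable {m n}

/-- Row and column sums of an exponent vector. -/
noncomputable def T (a : (Fin m × Fin n) →₀ ℕ) : (Fin m ⊕ Fin n) →₀ ℕ :=
  Finsupp.equivFunOnFinite.symm
    (Sum.elim (fun i => ∑ j, a (i, j)) (fun j => ∑ i, a (i, j)))

lemma T_inl (a : (Fin m × Fin n) →₀ ℕ) (i : Fin m) : T a (Sum.inl i) = ∑ j, a (i, j) := rfl

lemma T_inr (a : (Fin m × Fin n) →₀ ℕ) (j : Fin n) : T a (Sum.inr j) = ∑ i, a (i, j) := rfl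

lemma T_add (a b : (Fin m × Fin n) →₀ ℕ) : T (a + b) = T a + T b := by
  ext q; cases q <;> simp [T_inl, T_inr, Finset.sum_add_distrib]

lemma T_zero : T (0 : (Fin m × Fin n) →₀ ℕ) = 0 := by
  ext q; cases q <;> simp [T_inl, T_inr]

lemma T_single (p : Fin m × Fin n) (e : ℕ) :
    T (Finsupp.single p e) = Finsupp.single (Sum.inl p.1) e + Finsupp.single (Sum.inr p.2) e := by
  obtain ⟨p1, p2⟩ := p
  ext q; cases q with
  | inl i =>
    simp [T_inl, Finsupp.single_apply, Prod.ext_iff, ite_and, Finset.sum_ite_eq]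
  | inr j =>
    simp [T_inr, Finsupp.single_apply, Prod.ext_iff, ite_and, Finset.sum_ite_eq]

lemma phi_monomial (a : (Fin m × Fin n) →₀ ℕ) (c : k) :
    phi k m n (monomial a c) = monomial (T a) c := by
  induction a using Finsupp.induction with
  | zero => rw [monomial_zero', T_zero, monomial_zero']; simp [phi]
  | single_add p e f hpf he ih =>
    have h1 : (monomial (Finsupp.single p e + f) c : MvPolynomial (Fin m × Fin n) k)
        = monomial (Finsupp.single p e) 1 * monomial f c := by
      rw [monomial_mul, one_mul]
    rw [h1, map_mul, ih, ← X_pow_eq_monomial]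
    rw [map_pow]
    have h2 : phi k m n (X p) = X (Sum.inl p.1) * X (Sum.inr p.2) := by
      simp [phi]
    rw [h2, mul_pow, X_pow_eq_monomial, X_pow_eq_monomial, monomial_mul, one_mul,
      monomial_mul, one_mul, T_add, T_single]

lemma coeff_phi (f : MvPolynomial (Fin m × Fin n) k) (t : (Fin m ⊕ Fin n) →₀ ℕ) :
    coeff t (phi k m n f) = ∑ a ∈ f.support, if T a = t then coeff a f else 0 := by
  conv_lhs => rw [f.as_sum, map_sum]
  rw [coeff_sum]
  refine Finset.sum_congr rfl fun a _ => ?_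
  rw [phi_monomial, coeff_monomial]

variable (m n)

/-- The ideal of 2×2 minors of the generic matrix. -/
noncomputable def I : Ideal (MvPolynomial (Fin m × Fin n) k) :=
  minors2 (Matrix.of fun (i : Fin m) (j : Fin n) => (MvPolynomial.X (i, j) : MvPolynomial (Fin m × Fin n) k))

variable {m n}

/-- Distance between exponent vectors. -/
def meas (a b : (Fin m × Fin n) →₀ ℕ) : ℕ :=
  ∑ p : Fin m × Fin n, ((a p : ℤ) - (b p : ℤ)).natAbs

lemma meas_comm (a b : (Fin m × Fin n) →₀ ℕ) : meas a b = meas b a := by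
  unfold meas; refine Finset.sum_congr rfl fun p _ => ?_; omega

lemma eq_of_meas_eq_zero {a b : (Fin m × Fin n) →₀ ℕ} (h : meas a b = 0) : a = b := by
  ext p
  have := Finset.sum_eq_zero_iff.mp h p (Finset.mem_univ p)
  omega

lemma binom_mem :
    ∀ (N : ℕ) (a b : (Fin m × Fin n) →₀ ℕ), meas a b ≤ N → T a = T b →
      (monomial a 1 - monomial b 1 : MvPolynomial (Fin m × Fin n) k) ∈ I k m n := by
  intro N
  induction N with
  | zero =>
    intro a b hm hT
    rw [eq_of_meas_eq_zero (Nat.le_zero.mp hm), sub_self]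
    exact zero_mem _
  | succ N IH =>
    have key : ∀ a b : (Fin m × Fin n) →₀ ℕ, meas a b ≤ N + 1 → T a = T b →
        ∀ i j, b (i, j) < a (i, j) →
        (monomial a 1 - monomial b 1 : MvPolynomial (Fin m × Fin n) k) ∈ I k m n := by
      intro a b hm hT i j hp
      have hrow : ∀ i, ∑ j, a (i, j) = ∑ j, b (i, j) := fun i => by
        rw [← T_inl, ← T_inl, hT]
      have hcol : ∀ j, ∑ i, a (i, j) = ∑ i, b (i, j) := fun j => by
        rw [← T_inr, ← T_inr, hT]
      obtain ⟨j', hj'⟩ : ∃ j', a (i, j') < b (i, j') := by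
        by_contra hc; push_neg at hc
        have : ∑ j, b (i, j) < ∑ j, a (i, j) :=
          Finset.sum_lt_sum (fun j _ => hc j) ⟨j, Finset.mem_univ j, hp⟩
        have := hrow i; omega
      obtain ⟨i', hi'⟩ : ∃ i', b (i', j') < a (i', j') := by
        by_contra hc; push_neg at hc
        have : ∑ i, a (i, j') < ∑ i, b (i, j') :=
          Finset.sum_lt_sum (fun i _ => hc i) ⟨i, Finset.mem_univ i, hj'⟩
        have := hcol j'; omega
      have hii : i' ≠ i := by rintro rfl; omega
      have hjj : j' ≠ j := by rintro rfl; omega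
      set c : (Fin m × Fin n) →₀ ℕ :=
        a - Finsupp.single (i, j) 1 - Finsupp.single (i', j') 1 with hc
      have ha : a = c + Finsupp.single (i, j) 1 + Finsupp.single (i', j') 1 := by
        ext q
        simp only [hc, Finsupp.coe_add, Finsupp.coe_tsub, Pi.add_apply, Pi.sub_apply]
        rcases eq_or_ne q (i, j) with rfl | h1
        · simp [Finsupp.single_apply, Prod.ext_iff, hii, hjj, hii.symm, hjj.symm]
          omega
        rcases eq_or_ne q (i', j') with rfl | h2
        · simp [Finsupp.single_apply, Prod.ext_iff, hii, hjj, hii.symm, hjj.symm]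
          omega
        · simp [Finsupp.single_apply, Ne.symm h1, Ne.symm h2]
      set a' : (Fin m × Fin n) →₀ ℕ :=
        c + Finsupp.single (i, j') 1 + Finsupp.single (i', j) 1 with ha'
      have hTa' : T a' = T a := by
        rw [ha', ha]
        rw [T_add, T_add, T_add, T_add, T_single, T_single, T_single, T_single]
        abel
      -- values of a'
      have hij2 : ((i,j) : Fin m × Fin n) ≠ (i', j') := by simp [Prod.ext_iff, hii.symm]
      have haij : a' (i, j) = a (i, j) - 1 := by
        simp [ha', hc, Finsupp.single_apply, Prod.ext_iff, hii, hjj, hii.symm, hjj.symm]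
      have haij' : a' (i, j') = a (i, j') + 1 := by
        simp [ha', hc, Finsupp.single_apply, Prod.ext_iff, hii, hjj, hii.symm, hjj.symm]
      have hai'j : a' (i', j) = a (i', j) + 1 := by
        simp [ha', hc, Finsupp.single_apply, Prod.ext_iff, hii, hjj, hii.symm, hjj.symm]
      have hai'j' : a' (i', j') = a (i', j') - 1 := by
        simp [ha', hc, Finsupp.single_apply, Prod.ext_iff, hii, hjj, hii.symm, hjj.symm]
      have haq : ∀ q, q ≠ (i, j) → q ≠ (i, j') → q ≠ (i', j) → q ≠ (i', j') → a' q = a q := by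
        intro q h1 h2 h3 h4
        simp [ha', hc, Finsupp.single_apply, Ne.symm h1, Ne.symm h2, Ne.symm h3, Ne.symm h4]
      -- measure decrease
      have hmeas : meas a' b + 2 ≤ meas a b := by
        have hsub : ({(i,j), (i,j'), (i',j), (i',j')} : Finset (Fin m × Fin n)) ⊆ Finset.univ :=
          Finset.subset_univ _
        have hsplit : ∀ x : (Fin m × Fin n) →₀ ℕ,
            meas x b = (∑ q ∈ (Finset.univ \ {(i,j), (i,j'), (i',j), (i',j')}),
                ((x q : ℤ) - (b q : ℤ)).natAbs)
              + (((x (i,j) : ℤ) - b (i,j)).natAbs + ((x (i,j') : ℤ) - b (i,j')).natAbs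
                + ((x (i',j) : ℤ) - b (i',j)).natAbs + ((x (i',j') : ℤ) - b (i',j')).natAbs) := by
          intro x
          rw [meas, ← Finset.sum_sdiff hsub]
          congr 1
          rw [show ({(i,j), (i,j'), (i',j), (i',j')} : Finset (Fin m × Fin n))
              = insert (i,j) (insert (i,j') (insert (i',j) {(i',j')})) from rfl]
          rw [Finset.sum_insert (by simp [Prod.ext_iff, hii.symm, hjj.symm]),
            Finset.sum_insert (by simp [Prod.ext_iff, hii.symm, hjj]),
            Finset.sum_insert (by simp [Prod.ext_iff, hjj.symm]),
            Finset.sum_singleton]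
          ring
        rw [hsplit a', hsplit a]
        have hrest : (∑ q ∈ (Finset.univ \ {(i,j), (i,j'), (i',j), (i',j')}),
              ((a' q : ℤ) - (b q : ℤ)).natAbs)
            = ∑ q ∈ (Finset.univ \ {(i,j), (i,j'), (i',j), (i',j')}),
              ((a q : ℤ) - (b q : ℤ)).natAbs := by
          refine Finset.sum_congr rfl fun q hq => ?_
          simp only [Finset.mem_sdiff, Finset.mem_insert, Finset.mem_singleton, not_or] at hq
          rw [haq q hq.2.1 hq.2.2.1 hq.2.2.2.1 hq.2.2.2.2]
        rw [hrest]
        have h1 : 1 ≤ a (i, j) := by omega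
        have h2 : 1 ≤ a (i', j') := by omega
        rw [haij, haij', hai'j, hai'j']
        omega
      -- the minor step
      have hstep : (monomial a 1 - monomial a' 1 : MvPolynomial (Fin m × Fin n) k)
          ∈ I k m n := by
        have e : (monomial a 1 - monomial a' 1 : MvPolynomial (Fin m × Fin n) k)
            = monomial c 1 * (X (i, j) * X (i', j') - X (i, j') * X (i', j)) := by
          rw [mul_sub]
          congr 1
          · rw [X, X, monomial_mul, monomial_mul, one_mul, one_mul, ← add_assoc, ← ha]
          · rw [X, X, monomial_mul, monomial_mul, one_mul, one_mul, ← add_assoc, ← ha']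
        rw [e]
        exact Ideal.mul_mem_left _ _ (Ideal.subset_span ⟨i, i', j, j', rfl⟩)
      have hrec := IH a' b (by omega) (hTa'.trans hT)
      have e2 : (monomial a 1 - monomial b 1 : MvPolynomial (Fin m × Fin n) k)
          = (monomial a 1 - monomial a' 1) + (monomial a' 1 - monomial b 1) := by ring
      rw [e2]
      exact add_mem hstep hrec
    intro a b hm hT
    by_cases hab : a = b
    · rw [hab, sub_self]; exact zero_mem _
    obtain ⟨p, hp⟩ : ∃ p, a p ≠ b p := by
      by_contra hc; push_neg at hc; exact hab (Finsupp.ext hc)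
    obtain ⟨i, j⟩ := p
    rcases hp.lt_or_gt with h | h
    · have := key b a (by rw [meas_comm]; exact hm) hT.symm i j h
      have e : (monomial a 1 - monomial b 1 : MvPolynomial (Fin m × Fin n) k)
          = -(monomial b 1 - monomial a 1) := by ring
      rw [e]; exact neg_mem this
    · exact key a b hm hT i j h


lemma ker_sub :
    ∀ (N : ℕ) (f : MvPolynomial (Fin m × Fin n) k), f.support.card ≤ N →
      phi k m n f = 0 → f ∈ I k m n := by
  intro N
  induction N with
  | zero =>
    intro f hcard _
    have : f = 0 := by
      rwa [Nat.le_zero, Finset.card_eq_zero, MvPolynomial.support_eq_empty] at hcard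
    rw [this]; exact zero_mem _
  | succ N IH =>
    intro f hcard hker
    by_cases hf : f = 0
    · rw [hf]; exact zero_mem _
    obtain ⟨a, ha⟩ := (MvPolynomial.support_nonempty.mpr hf)
    have hca : coeff a f ≠ 0 := MvPolynomial.mem_support_iff.mp ha
    -- find a different monomial with the same T
    have hzero : (0 : k) = ∑ v ∈ f.support, if T v = T a then coeff v f else 0 := by
      rw [← coeff_phi, hker, MvPolynomial.coeff_zero]
    obtain ⟨b, hbf, hba, hTb⟩ : ∃ b ∈ f.support, b ≠ a ∧ T b = T a := by
      by_contra hc; push_neg at hc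
      have : ∑ v ∈ f.support, (if T v = T a then coeff v f else 0) = coeff a f := by
        rw [Finset.sum_eq_single_of_mem a ha]
        · simp
        · intro v hv hva
          simp [hc v hv hva]
      exact hca (by rw [← this, ← hzero])
    set c : k := coeff a f with hcdef
    set g : MvPolynomial (Fin m × Fin n) k :=
      f - monomial a c + monomial b c with hg
    have hcoeffg : ∀ q, coeff q g
        = coeff q f - (if a = q then c else 0) + (if b = q then c else 0) := by
      intro q
      rw [hg, MvPolynomial.coeff_add, MvPolynomial.coeff_sub, MvPolynomial.coeff_monomial,
        MvPolynomial.coeff_monomial]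
    have hsupg : g.support ⊆ f.support.erase a := by
      intro q hq
      have hq' : coeff q g ≠ 0 := MvPolynomial.mem_support_iff.mp hq
      rw [hcoeffg] at hq'
      rcases eq_or_ne q a with rfl | hqa
      · exfalso; apply hq'
        rw [if_pos rfl, if_neg hba, ← hcdef, sub_self, zero_add]
      rw [Finset.mem_erase]
      refine ⟨hqa, ?_⟩
      rcases eq_or_ne q b with rfl | hqb
      · exact hbf
      · rw [MvPolynomial.mem_support_iff]
        intro h0
        apply hq'
        simp [h0, Ne.symm hqa, Ne.symm hqb]
    have hcardg : g.support.card ≤ N := by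
      have h1 := Finset.card_le_card hsupg
      have h2 : (f.support.erase a).card < f.support.card := Finset.card_erase_lt_of_mem ha
      omega
    have hkerg : phi k m n g = 0 := by
      rw [hg, map_add, map_sub, phi_monomial, phi_monomial, hTb, hker]
      ring
    have hbinom : (monomial a c - monomial b c : MvPolynomial (Fin m × Fin n) k)
        ∈ I k m n := by
      have e : (monomial a c - monomial b c : MvPolynomial (Fin m × Fin n) k)
          = C c * (monomial a 1 - monomial b 1) := by
        simp [mul_sub, C_mul_monomial]
      rw [e]
      exact Ideal.mul_mem_left _ _ (binom_mem k (meas a b) a b le_rfl hTb.symm)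
    have hfg : f = g + (monomial a c - monomial b c) := by rw [hg]; ring
    rw [hfg]
    exact add_mem (IH g hcardg hkerg) hbinom

lemma I_eq_ker : I k m n = RingHom.ker (phi k m n).toRingHom := by
  apply le_antisymm
  · rw [I, minors2, Ideal.span_le]
    rintro p ⟨i, i', j, j', rfl⟩
    rw [SetLike.mem_coe, RingHom.mem_ker]
    show phi k m n _ = 0
    simp only [Matrix.of_apply, map_sub, map_mul]
    simp only [phi, MvPolynomial.aeval_X]
    ring
  · intro f hf
    exact ker_sub k f.support.card f le_rfl (RingHom.mem_ker.mp hf)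

end Minors2Aux

/-- The ideal of 2×2 minors of a generic `m × n` matrix of indeterminates over a field
is a prime ideal of the polynomial ring in the `mn` entries. -/
theorem minors2_generic_isPrime (k : Type*) [Field k] (m n : ℕ) (hm : 1 ≤ m) (hn : 1 ≤ n)
    (X : Matrix (Fin m) (Fin n) (MvPolynomial (Fin m × Fin n) k))
    (hX : ∀ i j, X i j = MvPolynomial.X (i, j)) :
    (minors2 X).IsPrime := by
  have hXeq : X = Matrix.of fun i j => (MvPolynomial.X (i, j) : MvPolynomial (Fin m × Fin n) k) := by
    funext i j; exact hX i j
  rw [hXeq]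
  show (Minors2Aux.I k m n).IsPrime
  rw [Minors2Aux.I_eq_ker]
  exact RingHom.ker_isPrime _
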